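/- The explicit 27×27 matrix e′ = (1/5)·M, with M the integer/golden-ratio matrix given in the paper (blocks A,B,C,D,E,F,G and a 3×3 and 3×24 border), is a symmetric real matrix satisfying (e′)² = 1; hence e′ is an involution and an orthogonal matrix. -/
import Mathlib


noncomputable section
open Matrix

def σ : ℝ := (1 - Real.sqrt 5) / 2
def τ : ℝ := (1 + Real.sqrt 5) / 2

def A4 : Matrix (Fin 4) (Fin 4) ℝ := !![0,τ,σ,0; τ,0,0,σ; σ,0,0,τ; 0,σ,τ,0]
def B4 : Matrix (Fin 4) (Fin 4) ℝ := !![-1,τ,σ,-1; τ,-1,-1,σ; σ,-1,-1,τ; -1,σ,τ,-1]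
def C4 : Matrix (Fin 4) (Fin 4) ℝ := !![1,σ,τ,1; σ,1,1,τ; τ,1,1,σ; 1,τ,σ,1]
def D4 : Matrix (Fin 4) (Fin 4) ℝ := !![1,0,0,1; 0,1,1,0; 0,1,1,0; 1,0,0,1]
def E4 : Matrix (Fin 4) (Fin 4) ℝ := !![τ,1,1,σ; 1,σ,τ,1; 1,τ,σ,1; σ,1,1,τ]
def F4 : Matrix (Fin 4) (Fin 4) ℝ := !![-1,σ,τ,-1; σ,-1,-1,τ; τ,-1,-1,σ; -1,τ,σ,-1]
def G4 : Matrix (Fin 4) (Fin 4) ℝ := !![τ,0,0,σ; 0,σ,τ,0; 0,τ,σ,0; σ,0,0,τ]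

/-- The 6×6 array of 4×4 blocks of `5e'`. -/
def eblocks : Fin 6 → Fin 6 → Matrix (Fin 4) (Fin 4) ℝ :=
  ![![A4,B4,A4,D4,E4,F4], ![B4,C4,D4,G4,F4,G4], ![A4,D4,E4,F4,A4,B4],
    ![D4,G4,F4,G4,B4,C4], ![E4,F4,A4,B4,A4,D4], ![F4,G4,B4,C4,D4,G4]]

/-- Border scalars: `border r k` is the entry of `5e'` in block-row `r` (blocks of
four coordinates 4–27) and column `k` (of the first three columns), and
symmetrically. -/
def border : Fin 6 → Fin 3 → ℝ :=
  ![![0,-1,1], ![-1,0,1], ![1,0,-1], ![1,-1,0], ![-1,1,0], ![0,1,-1]]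

def top3 : Matrix (Fin 3) (Fin 3) ℝ := !![2,2,1; 2,1,2; 1,2,2]

/-- The matrix `5e'`. -/
def M27 : Matrix (Fin 27) (Fin 27) ℝ := Matrix.of fun i j =>
  if hi : (i : ℕ) < 3 then
    if hj : (j : ℕ) < 3 then top3 ⟨i, hi⟩ ⟨j, hj⟩
    else border ⟨((j : ℕ) - 3) / 4, by omega⟩ ⟨i, hi⟩
  else
    if hj : (j : ℕ) < 3 then border ⟨((i : ℕ) - 3) / 4, by omega⟩ ⟨j, hj⟩
    else eblocks ⟨((i : ℕ) - 3) / 4, by omega⟩ ⟨((j : ℕ) - 3) / 4, by omega⟩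
      ⟨((i : ℕ) - 3) % 4, by omega⟩ ⟨((j : ℕ) - 3) % 4, by omega⟩

/-- The involution `e' = (1/5) M`. -/
def e' : Matrix (Fin 27) (Fin 27) ℝ := (1 / 5 : ℝ) • M27

/-! ### A mirror of `2 • M27` over `ℤ√5`, where everything is decidable. -/

abbrev Z5 := ℤ√(5:ℤ)
def zτ : Z5 := ⟨1,1⟩
def zσ : Z5 := ⟨1,-1⟩

def ZA4 : Matrix (Fin 4) (Fin 4) Z5 := !![0,zτ,zσ,0; zτ,0,0,zσ; zσ,0,0,zτ; 0,zσ,zτ,0]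
def ZB4 : Matrix (Fin 4) (Fin 4) Z5 := !![-2,zτ,zσ,-2; zτ,-2,-2,zσ; zσ,-2,-2,zτ; -2,zσ,zτ,-2]
def ZC4 : Matrix (Fin 4) (Fin 4) Z5 := !![2,zσ,zτ,2; zσ,2,2,zτ; zτ,2,2,zσ; 2,zτ,zσ,2]
def ZD4 : Matrix (Fin 4) (Fin 4) Z5 := !![2,0,0,2; 0,2,2,0; 0,2,2,0; 2,0,0,2]
def ZE4 : Matrix (Fin 4) (Fin 4) Z5 := !![zτ,2,2,zσ; 2,zσ,zτ,2; 2,zτ,zσ,2; zσ,2,2,zτ]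
def ZF4 : Matrix (Fin 4) (Fin 4) Z5 := !![-2,zσ,zτ,-2; zσ,-2,-2,zτ; zτ,-2,-2,zσ; -2,zτ,zσ,-2]
def ZG4 : Matrix (Fin 4) (Fin 4) Z5 := !![zτ,0,0,zσ; 0,zσ,zτ,0; 0,zτ,zσ,0; zσ,0,0,zτ]

def Zeblocks : Fin 6 → Fin 6 → Matrix (Fin 4) (Fin 4) Z5 :=
  ![![ZA4,ZB4,ZA4,ZD4,ZE4,ZF4], ![ZB4,ZC4,ZD4,ZG4,ZF4,ZG4], ![ZA4,ZD4,ZE4,ZF4,ZA4,ZB4],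
    ![ZD4,ZG4,ZF4,ZG4,ZB4,ZC4], ![ZE4,ZF4,ZA4,ZB4,ZA4,ZD4], ![ZF4,ZG4,ZB4,ZC4,ZD4,ZG4]]

def Zborder : Fin 6 → Fin 3 → Z5 :=
  ![![0,-2,2], ![-2,0,2], ![2,0,-2], ![2,-2,0], ![-2,2,0], ![0,2,-2]]

def Ztop3 : Matrix (Fin 3) (Fin 3) Z5 := !![4,4,2; 4,2,4; 2,4,4]

def ZM27 : Matrix (Fin 27) (Fin 27) Z5 := Matrix.of fun i j =>
  if hi : (i : ℕ) < 3 then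
    if hj : (j : ℕ) < 3 then Ztop3 ⟨i, hi⟩ ⟨j, hj⟩
    else Zborder ⟨((j : ℕ) - 3) / 4, by omega⟩ ⟨i, hi⟩
  else
    if hj : (j : ℕ) < 3 then Zborder ⟨((i : ℕ) - 3) / 4, by omega⟩ ⟨j, hj⟩
    else Zeblocks ⟨((i : ℕ) - 3) / 4, by omega⟩ ⟨((j : ℕ) - 3) / 4, by omega⟩
      ⟨((i : ℕ) - 3) % 4, by omega⟩ ⟨((j : ℕ) - 3) % 4, by omega⟩

set_option maxHeartbeats 1000000 in
theorem Tr0 : ∀ j, ZM27ᵀ ⟨0, by omega⟩ j = ZM27 ⟨0, by omega⟩ j := by decide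
set_option maxHeartbeats 1000000 in
theorem Tr1 : ∀ j, ZM27ᵀ ⟨1, by omega⟩ j = ZM27 ⟨1, by omega⟩ j := by decide
set_option maxHeartbeats 1000000 in
theorem Tr2 : ∀ j, ZM27ᵀ ⟨2, by omega⟩ j = ZM27 ⟨2, by omega⟩ j := by decide
set_option maxHeartbeats 1000000 in
theorem Tr3 : ∀ j, ZM27ᵀ ⟨3, by omega⟩ j = ZM27 ⟨3, by omega⟩ j := by decide
set_option maxHeartbeats 1000000 in
theorem Tr4 : ∀ j, ZM27ᵀ ⟨4, by omega⟩ j = ZM27 ⟨4, by omega⟩ j := by decide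
set_option maxHeartbeats 1000000 in
theorem Tr5 : ∀ j, ZM27ᵀ ⟨5, by omega⟩ j = ZM27 ⟨5, by omega⟩ j := by decide
set_option maxHeartbeats 1000000 in
theorem Tr6 : ∀ j, ZM27ᵀ ⟨6, by omega⟩ j = ZM27 ⟨6, by omega⟩ j := by decide
set_option maxHeartbeats 1000000 in
theorem Tr7 : ∀ j, ZM27ᵀ ⟨7, by omega⟩ j = ZM27 ⟨7, by omega⟩ j := by decide
set_option maxHeartbeats 1000000 in
theorem Tr8 : ∀ j, ZM27ᵀ ⟨8, by omega⟩ j = ZM27 ⟨8, by omega⟩ j := by decide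
set_option maxHeartbeats 1000000 in
theorem Tr9 : ∀ j, ZM27ᵀ ⟨9, by omega⟩ j = ZM27 ⟨9, by omega⟩ j := by decide
set_option maxHeartbeats 1000000 in
theorem Tr10 : ∀ j, ZM27ᵀ ⟨10, by omega⟩ j = ZM27 ⟨10, by omega⟩ j := by decide
set_option maxHeartbeats 1000000 in
theorem Tr11 : ∀ j, ZM27ᵀ ⟨11, by omega⟩ j = ZM27 ⟨11, by omega⟩ j := by decide
set_option maxHeartbeats 1000000 in
theorem Tr12 : ∀ j, ZM27ᵀ ⟨12, by omega⟩ j = ZM27 ⟨12, by omega⟩ j := by decide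
set_option maxHeartbeats 1000000 in
theorem Tr13 : ∀ j, ZM27ᵀ ⟨13, by omega⟩ j = ZM27 ⟨13, by omega⟩ j := by decide
set_option maxHeartbeats 1000000 in
theorem Tr14 : ∀ j, ZM27ᵀ ⟨14, by omega⟩ j = ZM27 ⟨14, by omega⟩ j := by decide
set_option maxHeartbeats 1000000 in
theorem Tr15 : ∀ j, ZM27ᵀ ⟨15, by omega⟩ j = ZM27 ⟨15, by omega⟩ j := by decide
set_option maxHeartbeats 1000000 in
theorem Tr16 : ∀ j, ZM27ᵀ ⟨16, by omega⟩ j = ZM27 ⟨16, by omega⟩ j := by decide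
set_option maxHeartbeats 1000000 in
theorem Tr17 : ∀ j, ZM27ᵀ ⟨17, by omega⟩ j = ZM27 ⟨17, by omega⟩ j := by decide
set_option maxHeartbeats 1000000 in
theorem Tr18 : ∀ j, ZM27ᵀ ⟨18, by omega⟩ j = ZM27 ⟨18, by omega⟩ j := by decide
set_option maxHeartbeats 1000000 in
theorem Tr19 : ∀ j, ZM27ᵀ ⟨19, by omega⟩ j = ZM27 ⟨19, by omega⟩ j := by decide
set_option maxHeartbeats 1000000 in
theorem Tr20 : ∀ j, ZM27ᵀ ⟨20, by omega⟩ j = ZM27 ⟨20, by omega⟩ j := by decide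
set_option maxHeartbeats 1000000 in
theorem Tr21 : ∀ j, ZM27ᵀ ⟨21, by omega⟩ j = ZM27 ⟨21, by omega⟩ j := by decide
set_option maxHeartbeats 1000000 in
theorem Tr22 : ∀ j, ZM27ᵀ ⟨22, by omega⟩ j = ZM27 ⟨22, by omega⟩ j := by decide
set_option maxHeartbeats 1000000 in
theorem Tr23 : ∀ j, ZM27ᵀ ⟨23, by omega⟩ j = ZM27 ⟨23, by omega⟩ j := by decide
set_option maxHeartbeats 1000000 in
theorem Tr24 : ∀ j, ZM27ᵀ ⟨24, by omega⟩ j = ZM27 ⟨24, by omega⟩ j := by decide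
set_option maxHeartbeats 1000000 in
theorem Tr25 : ∀ j, ZM27ᵀ ⟨25, by omega⟩ j = ZM27 ⟨25, by omega⟩ j := by decide
set_option maxHeartbeats 1000000 in
theorem Tr26 : ∀ j, ZM27ᵀ ⟨26, by omega⟩ j = ZM27 ⟨26, by omega⟩ j := by decide

theorem ZT : ZM27ᵀ = ZM27 := by
  apply Matrix.ext; intro i j
  fin_cases i
  exacts [Tr0 j, Tr1 j, Tr2 j, Tr3 j, Tr4 j, Tr5 j, Tr6 j, Tr7 j, Tr8 j, Tr9 j, Tr10 j, Tr11 j, Tr12 j, Tr13 j, Tr14 j, Tr15 j, Tr16 j, Tr17 j, Tr18 j, Tr19 j, Tr20 j, Tr21 j, Tr22 j, Tr23 j, Tr24 j, Tr25 j, Tr26 j]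

def ZI : Matrix (Fin 27) (Fin 27) Z5 := (100 : Z5) • 1

set_option maxHeartbeats 1000000 in
theorem Zr0 : ∀ j, (ZM27 * ZM27) ⟨0, by omega⟩ j = ZI ⟨0, by omega⟩ j := by decide
set_option maxHeartbeats 1000000 in
theorem Zr1 : ∀ j, (ZM27 * ZM27) ⟨1, by omega⟩ j = ZI ⟨1, by omega⟩ j := by decide
set_option maxHeartbeats 1000000 in
theorem Zr2 : ∀ j, (ZM27 * ZM27) ⟨2, by omega⟩ j = ZI ⟨2, by omega⟩ j := by decide
set_option maxHeartbeats 1000000 in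
theorem Zr3 : ∀ j, (ZM27 * ZM27) ⟨3, by omega⟩ j = ZI ⟨3, by omega⟩ j := by decide
set_option maxHeartbeats 1000000 in
theorem Zr4 : ∀ j, (ZM27 * ZM27) ⟨4, by omega⟩ j = ZI ⟨4, by omega⟩ j := by decide
set_option maxHeartbeats 1000000 in
theorem Zr5 : ∀ j, (ZM27 * ZM27) ⟨5, by omega⟩ j = ZI ⟨5, by omega⟩ j := by decide
set_option maxHeartbeats 1000000 in
theorem Zr6 : ∀ j, (ZM27 * ZM27) ⟨6, by omega⟩ j = ZI ⟨6, by omega⟩ j := by decide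
set_option maxHeartbeats 1000000 in
theorem Zr7 : ∀ j, (ZM27 * ZM27) ⟨7, by omega⟩ j = ZI ⟨7, by omega⟩ j := by decide
set_option maxHeartbeats 1000000 in
theorem Zr8 : ∀ j, (ZM27 * ZM27) ⟨8, by omega⟩ j = ZI ⟨8, by omega⟩ j := by decide
set_option maxHeartbeats 1000000 in
theorem Zr9 : ∀ j, (ZM27 * ZM27) ⟨9, by omega⟩ j = ZI ⟨9, by omega⟩ j := by decide
set_option maxHeartbeats 1000000 in
theorem Zr10 : ∀ j, (ZM27 * ZM27) ⟨10, by omega⟩ j = ZI ⟨10, by omega⟩ j := by decide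
set_option maxHeartbeats 1000000 in
theorem Zr11 : ∀ j, (ZM27 * ZM27) ⟨11, by omega⟩ j = ZI ⟨11, by omega⟩ j := by decide
set_option maxHeartbeats 1000000 in
theorem Zr12 : ∀ j, (ZM27 * ZM27) ⟨12, by omega⟩ j = ZI ⟨12, by omega⟩ j := by decide
set_option maxHeartbeats 1000000 in
theorem Zr13 : ∀ j, (ZM27 * ZM27) ⟨13, by omega⟩ j = ZI ⟨13, by omega⟩ j := by decide
set_option maxHeartbeats 1000000 in
theorem Zr14 : ∀ j, (ZM27 * ZM27) ⟨14, by omega⟩ j = ZI ⟨14, by omega⟩ j := by decide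
set_option maxHeartbeats 1000000 in
theorem Zr15 : ∀ j, (ZM27 * ZM27) ⟨15, by omega⟩ j = ZI ⟨15, by omega⟩ j := by decide
set_option maxHeartbeats 1000000 in
theorem Zr16 : ∀ j, (ZM27 * ZM27) ⟨16, by omega⟩ j = ZI ⟨16, by omega⟩ j := by decide
set_option maxHeartbeats 1000000 in
theorem Zr17 : ∀ j, (ZM27 * ZM27) ⟨17, by omega⟩ j = ZI ⟨17, by omega⟩ j := by decide
set_option maxHeartbeats 1000000 in
theorem Zr18 : ∀ j, (ZM27 * ZM27) ⟨18, by omega⟩ j = ZI ⟨18, by omega⟩ j := by decide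
set_option maxHeartbeats 1000000 in
theorem Zr19 : ∀ j, (ZM27 * ZM27) ⟨19, by omega⟩ j = ZI ⟨19, by omega⟩ j := by decide
set_option maxHeartbeats 1000000 in
theorem Zr20 : ∀ j, (ZM27 * ZM27) ⟨20, by omega⟩ j = ZI ⟨20, by omega⟩ j := by decide
set_option maxHeartbeats 1000000 in
theorem Zr21 : ∀ j, (ZM27 * ZM27) ⟨21, by omega⟩ j = ZI ⟨21, by omega⟩ j := by decide
set_option maxHeartbeats 1000000 in
theorem Zr22 : ∀ j, (ZM27 * ZM27) ⟨22, by omega⟩ j = ZI ⟨22, by omega⟩ j := by decide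
set_option maxHeartbeats 1000000 in
theorem Zr23 : ∀ j, (ZM27 * ZM27) ⟨23, by omega⟩ j = ZI ⟨23, by omega⟩ j := by decide
set_option maxHeartbeats 1000000 in
theorem Zr24 : ∀ j, (ZM27 * ZM27) ⟨24, by omega⟩ j = ZI ⟨24, by omega⟩ j := by decide
set_option maxHeartbeats 1000000 in
theorem Zr25 : ∀ j, (ZM27 * ZM27) ⟨25, by omega⟩ j = ZI ⟨25, by omega⟩ j := by decide
set_option maxHeartbeats 1000000 in
theorem Zr26 : ∀ j, (ZM27 * ZM27) ⟨26, by omega⟩ j = ZI ⟨26, by omega⟩ j := by decide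

theorem Zmul : ZM27 * ZM27 = (100 : Z5) • 1 := by
  show _ = ZI
  apply Matrix.ext; intro i j
  fin_cases i
  exacts [Zr0 j, Zr1 j, Zr2 j, Zr3 j, Zr4 j, Zr5 j, Zr6 j, Zr7 j, Zr8 j, Zr9 j, Zr10 j, Zr11 j, Zr12 j, Zr13 j, Zr14 j, Zr15 j, Zr16 j, Zr17 j, Zr18 j, Zr19 j, Zr20 j, Zr21 j, Zr22 j, Zr23 j, Zr24 j, Zr25 j, Zr26 j]


/-! ### Transfer to `ℝ` via `Zsqrtd.toReal`. -/

def g : Z5 →+* ℝ := Zsqrtd.toReal (by norm_num)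

lemma g_apply (a : Z5) : g a = a.re + a.im * Real.sqrt 5 := by
  simp [g, Zsqrtd.toReal_apply]

lemma hA : ∀ a b : Fin 4, g (ZA4 a b) = 2 * A4 a b := by
  intro a b; fin_cases a <;> fin_cases b <;> simp [ZA4, A4, zτ, zσ, τ, σ, g_apply] <;> ring
lemma hB : ∀ a b : Fin 4, g (ZB4 a b) = 2 * B4 a b := by
  intro a b; fin_cases a <;> fin_cases b <;> simp [ZB4, B4, zτ, zσ, τ, σ, g_apply] <;> ring
lemma hC : ∀ a b : Fin 4, g (ZC4 a b) = 2 * C4 a b := by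
  intro a b; fin_cases a <;> fin_cases b <;> simp [ZC4, C4, zτ, zσ, τ, σ, g_apply] <;> ring
lemma hD : ∀ a b : Fin 4, g (ZD4 a b) = 2 * D4 a b := by
  intro a b; fin_cases a <;> fin_cases b <;> simp [ZD4, D4, zτ, zσ, τ, σ, g_apply] <;> ring
lemma hE : ∀ a b : Fin 4, g (ZE4 a b) = 2 * E4 a b := by
  intro a b; fin_cases a <;> fin_cases b <;> simp [ZE4, E4, zτ, zσ, τ, σ, g_apply] <;> ring
lemma hF : ∀ a b : Fin 4, g (ZF4 a b) = 2 * F4 a b := by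
  intro a b; fin_cases a <;> fin_cases b <;> simp [ZF4, F4, zτ, zσ, τ, σ, g_apply] <;> ring
lemma hG : ∀ a b : Fin 4, g (ZG4 a b) = 2 * G4 a b := by
  intro a b; fin_cases a <;> fin_cases b <;> simp [ZG4, G4, zτ, zσ, τ, σ, g_apply] <;> ring

lemma hblocks : ∀ (r c : Fin 6) (a b : Fin 4),
    g (Zeblocks r c a b) = 2 * eblocks r c a b := by
  intro r c a b
  fin_cases r <;> fin_cases c <;>
    simp only [Zeblocks, eblocks, Matrix.cons_val', Matrix.cons_val_zero, Matrix.cons_val_one,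
      Matrix.head_cons, Matrix.cons_val_fin_one, Matrix.empty_val', Matrix.head_fin_const,
      Matrix.cons_val_succ] <;>
    first
      | exact hA a b | exact hB a b | exact hC a b | exact hD a b
      | exact hE a b | exact hF a b | exact hG a b

lemma hborder : ∀ (r : Fin 6) (k : Fin 3), g (Zborder r k) = 2 * border r k := by
  intro r k
  fin_cases r <;> fin_cases k <;> norm_num [Zborder, border, g_apply]

lemma htop : ∀ a b : Fin 3, g (Ztop3 a b) = 2 * top3 a b := by
  intro a b
  fin_cases a <;> fin_cases b <;> norm_num [Ztop3, top3, g_apply]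

lemma hmap : ZM27.map g = (2:ℝ) • M27 := by
  ext i j
  simp only [Matrix.map_apply, Matrix.smul_apply, smul_eq_mul, ZM27, M27, Matrix.of_apply]
  split_ifs with hi hj hj
  · exact htop _ _
  · exact hborder _ _
  · exact hborder _ _
  · exact hblocks _ _ _ _

lemma hMT : M27ᵀ = M27 := by
  have h2 : (2:ℝ) • M27ᵀ = (2:ℝ) • M27 := by
    calc (2:ℝ) • M27ᵀ = ((2:ℝ) • M27)ᵀ := by rw [Matrix.transpose_smul]
      _ = (ZM27.map g)ᵀ := by rw [hmap]
      _ = ZM27ᵀ.map g := by rw [Matrix.transpose_map]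
      _ = ZM27.map g := by rw [ZT]
      _ = (2:ℝ) • M27 := hmap
  exact smul_right_injective _ (by norm_num : (2:ℝ) ≠ 0) h2

lemma hMul : M27 * M27 = (25:ℝ) • 1 := by
  have h : ((2:ℝ) • M27) * ((2:ℝ) • M27) = (100:ℝ) • 1 := by
    rw [← hmap, ← Matrix.map_mul, Zmul]
    ext i j
    simp [Matrix.map_apply, Matrix.smul_apply, smul_eq_mul, Matrix.one_apply, apply_ite g,
      _root_.map_mul, map_zero, _root_.map_one, map_ofNat]
  rw [smul_mul_assoc, mul_smul_comm, smul_smul] at h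
  have h2 : (4:ℝ) • (M27 * M27) = (4:ℝ) • ((25:ℝ) • (1 : Matrix (Fin 27) (Fin 27) ℝ)) := by
    rw [smul_smul, show (4:ℝ) * 25 = 100 by norm_num, ← h]; norm_num
  exact smul_right_injective _ (by norm_num : (4:ℝ) ≠ 0) h2

theorem e'_symmetric_involution : e'ᵀ = e' ∧ e' * e' = 1 := by
  constructor
  · rw [e', Matrix.transpose_smul, hMT]
  · rw [e', smul_mul_assoc, mul_smul_comm, smul_smul, hMul, smul_smul]
    norm_num
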